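/- If S ⊆ L contains exactly one of the two nodes t_{x,1}, t_{x,2} of some x-gadget, then in no pair of cycle packings (one on G[S], one on G[V\S]) can that withheld node be covered: the node in S has no cycle through it within G[S] intersected with the gadget structure (its only arcs into S-nodes are to its twin, which is absent), so the leader cannot guarantee covering all its nodes with such a strategy. -/

import Mathlib

variable {V : Type*} [DecidableEq V]

/-- A directed (simple) cycle given as a list of distinct vertices. -/
def IsDicycle (A : V → V → Prop) (c : List V) : Prop :=
  2 ≤ c.length ∧ c.Nodup ∧ c.Chain' A ∧
    ∀ h : c ≠ [], A (c.getLast h) (c.head h)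

def cycVerts (c : List V) : Set V := {v | v ∈ c}

/-- A `K`-cycle packing inside the vertex set `W`. -/
def IsCyclePackingOn (A : V → V → Prop) (K : ℕ) (W : Set V) (P : Finset (List V)) : Prop :=
  (∀ c ∈ P, IsDicycle A c ∧ c.length ≤ K ∧ ∀ v ∈ c, v ∈ W) ∧
  (P : Set (List V)).Pairwise fun c d => ∀ v, v ∈ c → v ∉ d

def packSize (P : Finset (List V)) : ℕ := ∑ c ∈ P, c.length

def pcovered (P : Finset (List V)) : Set V := {v | ∃ c ∈ P, v ∈ c}

/-- Maximum size of a `K`-cycle packing on `G[W]`. -/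
noncomputable def wDir (A : V → V → Prop) (K : ℕ) (W : Set V) : ℕ :=
  sSup {n | ∃ P, IsCyclePackingOn A K W P ∧ packSize P = n}

/-- Minimum number of `L`-nodes covered over all maximum `K`-cycle packings on `G[W]`. -/
noncomputable def wLDir (A : V → V → Prop) (K : ℕ) (L W : Set V) : ℕ :=
  sInf {k | ∃ P, IsCyclePackingOn A K W P ∧ packSize P = wDir A K W ∧
    (pcovered P ∩ L).ncard = k}

/-- let `S ⊆ L` be a leader strategy containing `t1` but not its twin `t2`,
where (as in the Stackelberg KEP construction) the only leader node reachable from `t1`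
by an arc is `t2`. Then `t1` cannot be covered by any pair of cycle packings, one on
`G[S]` and one on `G[V\S]`. -/
theorem stmt9 (A : V → V → Prop) (L S : Set V) (hS : S ⊆ L)
    (t1 t2 : V) (h1 : t1 ∈ S) (h2 : t2 ∉ S)
    (hout : ∀ u, A t1 u → u ∈ L → u = t2) (K : ℕ) :
    (∀ P, IsCyclePackingOn A K S P → t1 ∉ pcovered P) ∧
    (∀ Q, IsCyclePackingOn A K Sᶜ Q → t1 ∉ pcovered Q) := by
  constructor
  · rintro P hP ⟨c, hcP, htc⟩
    obtain ⟨⟨hlen, _, hchain, hlast⟩, _, hsub⟩ := hP.1 c hcP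
    have hne : c ≠ [] := by rintro rfl; simp at htc
    -- find a successor of t1 in the cycle
    obtain ⟨i, hget⟩ := List.mem_iff_get.mp htc
    have hsucc : ∃ u ∈ c, A t1 u := by
      by_cases hilt : (i : ℕ) + 1 < c.length
      · refine ⟨c.get ⟨i + 1, hilt⟩, List.get_mem _ _, ?_⟩
        have := List.isChain_iff_getElem.mp hchain i (by omega)
        rw [List.get_eq_getElem] at hget
        rwa [hget] at this
      · have hi : (i : ℕ) = c.length - 1 := by have := i.2; omega
        refine ⟨c.head hne, List.head_mem hne, ?_⟩
        have hgl : c.getLast hne = t1 := by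
          rw [← hget, List.getLast_eq_getElem, List.get_eq_getElem]
          congr 1
          exact hi.symm
        have := hlast hne
        rwa [hgl] at this
    obtain ⟨u, huc, hAu⟩ := hsucc
    have huS : u ∈ S := hsub u huc
    have : u = t2 := hout u hAu (hS huS)
    exact h2 (this ▸ huS)
  · rintro Q hQ ⟨c, hcQ, htc⟩
    exact (hQ.1 c hcQ).2.2 t1 htc h1
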